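/- For every k-colored permutation π of length n, the recording tableau of the k-ribbon insertion algorithm equals the path tableau produced by Fomin's growth rules along the top edge of the square diagram: Q(π) = Q̂(π). -/

import Mathlib

namespace KRF

/-- A letter of the alphabet `{1_1, …, 1_k, 2}`:  `one j` stands for the letter `1_j`
(with `1 ≤ j ≤ k` for genuine letters), and `two` stands for the letter `2`. -/
inductive Letter (k : ℕ) : Type where
  | one : ℕ → Letter k
  | two : Letter k
deriving DecidableEq

/-- A word over the alphabet `{1_1, …, 1_k, 2}`, listed from the leftmost letter to the
rightmost letter. -/
abbrev Word (k : ℕ) := List (Letter k)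

/-- The contribution of a letter to the rank: each `1_j` counts `1` and each `2` counts `2`. -/
def Letter.rank {k : ℕ} : Letter k → ℕ
  | .one _ => 1
  | .two => 2

/-- The rank of a word: the sum of its letters. -/
def Word.rank {k : ℕ} (w : Word k) : ℕ := (w.map Letter.rank).sum

/-- The letter `1_j` is valid when `1 ≤ j ≤ k`. -/
def Letter.Valid (k : ℕ) : Letter k → Prop
  | .one j => 1 ≤ j ∧ j ≤ k
  | .two => True

/-- A genuine word of the Fibonacci poset `Z(k)`: all of its letters are valid. -/
def Word.Valid (k : ℕ) (w : Word k) : Prop := ∀ l ∈ w, l.Valid k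

/-- The cover relation of the Fibonacci poset `Z(k)`:  `z` is covered by `w` iff `z` is
obtained from `w` either by changing a `2` into some `1_j` when all letters to the left of
that `2` are `2`'s, or by deleting the leftmost letter of the form `1_j`. -/
def ZCovers (k : ℕ) (z w : Word k) : Prop :=
  (∃ (p s : Word k) (j : ℕ), (∀ l ∈ p, l = Letter.two) ∧ 1 ≤ j ∧ j ≤ k ∧
      w = p ++ Letter.two :: s ∧ z = p ++ Letter.one j :: s) ∨
  (∃ (p s : Word k) (j : ℕ), (∀ l ∈ p, l = Letter.two) ∧ 1 ≤ j ∧ j ≤ k ∧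
      w = p ++ Letter.one j :: s ∧ z = p ++ s)

/-- `c 0 ⋖ c 1 ⋖ ⋯ ⋖ c n` is a saturated chain in `Z(k)` starting at the empty word. -/
def IsZChain (k n : ℕ) (c : ℕ → Word k) : Prop :=
  c 0 = [] ∧ ∀ i, i < n → ZCovers k (c i) (c (i + 1))

end KRF
namespace KRF

/-- A column of a (tiled and filled) `k`-ribbon Fibonacci tableau.
`single h v` is a column of height 1 (shape letter `1_h`) tiled by one `k`-ribbon of
height `h` filled with the value `v`.
`double ht hb vt vb` is a column of height 2 (shape letter `2`) tiled by a `k`-ribbon of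
height `ht` filled with `vt` stacked on top of a `k`-ribbon of height `hb` (always
`hb = k + 1 - ht` for genuine tableaux) filled with `vb`. -/
inductive Col (k : ℕ) : Type where
  | single : ℕ → ℕ → Col k
  | double : ℕ → ℕ → ℕ → ℕ → Col k
deriving DecidableEq

/-- A (tiled, filled) `k`-ribbon Fibonacci tableau: its list of columns, from the leftmost
column to the rightmost one. -/
abbrev Tab (k : ℕ) := List (Col k)

/-- The shape letter of a column. -/
def Col.shape {k : ℕ} : Col k → Letter k
  | .single h _ => Letter.one h
  | .double _ _ _ _ => Letter.two

/-- The `k`-ribbon Fibonacci shape (a word) underlying a tableau. -/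
def Tab.shape {k : ℕ} (T : Tab k) : Word k := T.map Col.shape

/-- The value in the bottom `k`-ribbon of a column. -/
def Col.bottomVal {k : ℕ} : Col k → ℕ
  | .single _ v => v
  | .double _ _ _ vb => vb

/-- The heights occurring in a column are genuine ribbon heights: between `1` and `k`,
and in a column of height 2 the two heights sum to `k + 1`. -/
def Col.HeightsValid (k : ℕ) : Col k → Prop
  | .single h _ => 1 ≤ h ∧ h ≤ k
  | .double ht hb _ _ => 1 ≤ ht ∧ ht ≤ k ∧ hb = k + 1 - ht

/-- The list of all entries of a tableau (one for each `k`-ribbon). -/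
def Tab.entries {k : ℕ} (T : Tab k) : List ℕ :=
  (T.map fun c => match c with
    | Col.single _ v => [v]
    | Col.double _ _ vt vb => [vt, vb]).flatten

/-- The list of the bottom-ribbon values of the columns of a tableau. -/
def Tab.bottoms {k : ℕ} (T : Tab k) : List ℕ := T.map Col.bottomVal

/-- `T` is a standard `k`-ribbon Fibonacci tableau with entries `1, …, n`:
heights are valid, the entries are exactly `1, …, n`,  and the tableau can be built by
placing `n, n-1, …, 1` in order, each new `k`-ribbon being either appended (as a new
rightmost height-1 column) to the shape formed by the `k`-ribbons containing larger
entries, or stacked on top of a single such `k`-ribbon.  Equivalently (and this is how we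
formalize it): the bottom entries strictly decrease from left to right (in particular the
`k`-ribbon containing the leftmost square of the bottom row contains `n`), and in each
column of height 2 the top entry is smaller than the bottom entry. -/
def IsStandardTab (k n : ℕ) (T : Tab k) : Prop :=
  (∀ c ∈ T, Col.HeightsValid k c) ∧
  (Tab.entries T).Perm (List.range' 1 n) ∧
  List.Chain' (fun a b => b < a) (Tab.bottoms T) ∧
  (∀ c ∈ T, ∀ ht hb vt vb, c = Col.double ht hb vt vb → vt < vb)

/-- Updating a (partial) path tableau along one cover step `z ⋖ w` of `Z(k)`, placing the
value `i` in the `k` new squares of `w` relative to `z`:  if `w` is obtained from `z` by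
inserting a letter `1_j` after the prefix of `2`'s, a new height-1 column with a single
ribbon of height `j` filled with `i` is created there; if `w` is obtained from `z` by
changing the letter `1_h` just after the prefix of `2`'s into a `2`, the `k` new squares
of that column form a `k`-ribbon of height `k + 1 - h` filled with `i`, stacked on top of
the already present `k`-ribbon of height `h`. -/
def updateTab (k : ℕ) (i : ℕ) : Word k → Word k → Tab k → Tab k
  | Letter.two :: z', Letter.two :: w', c :: T => c :: updateTab k i z' w' T
  | Letter.one h :: _, Letter.two :: _, Col.single _ v :: T =>
      Col.double (k + 1 - h) h i v :: T
  | z, Letter.one j :: w', T => if z = w' then Col.single j i :: T else T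
  | _, _, T => T

/-- The `k`-ribbon Fibonacci path tableau determined by a saturated chain in `Z(k)`:
for each `i = 1, …, n` the value `i` is placed in the `k` new squares of `c i` relative
to `c (i-1)`. -/
def chainTab (k : ℕ) (c : ℕ → Word k) : ℕ → Tab k
  | 0 => []
  | m + 1 => updateTab k (m + 1) (c m) (c (m + 1)) (chainTab k c m)

/-- `T` is a `k`-ribbon Fibonacci path tableau with entries `1, …, n`: it is obtained
from some saturated chain `∅ = c 0 ⋖ c 1 ⋖ ⋯ ⋖ c n` in `Z(k)` by placing `i`'s in the
`k` new squares created at the `i`-th step. -/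
def IsPathTab (k n : ℕ) (T : Tab k) : Prop :=
  ∃ c : ℕ → Word k, IsZChain k n c ∧ T = chainTab k c n

end KRF
namespace KRF

/-- A `k`-colored permutation of length `n`: a permutation `x_1 x_2 ⋯ x_n` of `{1, …, n}`
(here `x_i = perm i + 1`, using `Fin n` positions and values) together with a color
`color i ∈ {1, …, k}` attached to each entry. -/
structure ColoredPerm (n k : ℕ) : Type where
  perm : Equiv.Perm (Fin n)
  color : Fin n → ℕ
  color_pos : ∀ i, 1 ≤ color i
  color_le : ∀ i, color i ≤ k

/-- Insertion of a value `x` of color `j` into a `k`-ribbon Fibonacci tableau: compare `x`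
with the value `t` in the `k`-ribbon containing the leftmost square of the bottom row.
If the tableau is empty or `x > t`, a new leftmost height-1 column consisting of a single
`k`-ribbon of height `j` filled with `x` is created.  If `x < t`, a `k`-ribbon of height
`j` filled with `x` is placed on top of the `k`-ribbon containing `t` (which is forced to
become a `k`-ribbon of height `k + 1 - j`); if a `k`-ribbon of height `l` filled with `b`
was already on top of the ribbon containing `t`, it is bumped out and the value `b` with
color `l` is inserted recursively into the tableau formed by the columns to the right. -/
def insertVal (k : ℕ) (x j : ℕ) : Tab k → Tab k
  | [] => [Col.single j x]
  | c :: rest =>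
    if Col.bottomVal c < x then Col.single j x :: c :: rest
    else
      match c with
      | Col.single _ v => Col.double j (k + 1 - j) x v :: rest
      | Col.double ht _ vt vb => Col.double j (k + 1 - j) x vb :: insertVal k vt ht rest

/-- The insertion tableau obtained after inserting the first `i` colored entries
`x_1^{j_1}, …, x_i^{j_i}` of the `k`-colored permutation `π` into the empty tableau. -/
def PPartial (k n : ℕ) (π : ColoredPerm n k) (i : ℕ) : Tab k :=
  ((List.finRange n).take i).foldl
    (fun T m => insertVal k ((π.perm m : ℕ) + 1) (π.color m) T) []

/-- The insertion tableau `P(π)` of a `k`-colored permutation. -/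
def PTab (k n : ℕ) (π : ColoredPerm n k) : Tab k := PPartial k n π n

/-- The chain of shapes of the partial insertion tableaux of `π`. -/
def QChain (k n : ℕ) (π : ColoredPerm n k) (i : ℕ) : Word k :=
  Tab.shape (PPartial k n π i)

/-- The recording tableau `Q(π)`: it has the same shape as `P(π)`, and after the `i`-th
insertion the value `i` is placed in the `k` squares by which the shape grew at step `i`. -/
def QTab (k n : ℕ) (π : ColoredPerm n k) : Tab k := chainTab k (QChain k n π) n

end KRF
namespace KRF

/-- Fomin's local growth rule: given the labels `ν` (bottom-left), `μ₁` (top-left),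
`μ₂` (bottom-right) of a unit square and the `X` of the square (`some j` if the square
contains an `X^j`, `none` otherwise), it computes the top-right label `λ`:
(1) if exactly one of `μ₁, μ₂` covers `ν` and the other equals `ν`, then `λ` is the
covering one; (2) if both cover `ν` then `λ = 2ν`; (3) if `μ₁ = ν = μ₂` and the square
contains an `X^j` then `λ = 1_j ν`; (4) if `μ₁ = ν = μ₂` and there is no `X`, `λ = ν`. -/
def growthRule (k : ℕ) (ν μ₁ μ₂ : Word k) (x : Option ℕ) : Word k :=
  if μ₁ = ν ∧ μ₂ = ν then
    match x with
    | some j => Letter.one j :: ν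
    | none => ν
  else if μ₁ = ν then μ₂
  else if μ₂ = ν then μ₁
  else Letter.two :: ν

/-- The content of the unit square in column `c+1` and row `r+1` (1-indexed) of the square
diagram of `π`: `some j` if it contains an `X^j` (i.e. `π` sends position `c+1` to value
`r+1`, colored `j`), and `none` otherwise. -/
def squareX (k n : ℕ) (π : ColoredPerm n k) (c r : ℕ) : Option ℕ :=
  if h : c < n ∧ r < n then
    if (π.perm ⟨c, h.1⟩ : ℕ) = r then some (π.color ⟨c, h.1⟩) else none
  else none

/-- The labels of the corners of the square diagram of `π` produced by Fomin's growth
rules: every corner on the left and bottom edges is labeled by the empty word, and the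
top-right corner of each unit square is computed by the local growth rule. -/
def growth (k n : ℕ) (π : ColoredPerm n k) : ℕ → ℕ → Word k
  | 0, _ => []
  | _ + 1, 0 => []
  | c + 1, r + 1 =>
      growthRule k (growth k n π c r) (growth k n π c (r + 1)) (growth k n π (c + 1) r)
        (squareX k n π c r)
termination_by c r => (c, r)

/-- The saturated chain read bottom-to-top up the right edge of the growth diagram. -/
def PhatChain (k n : ℕ) (π : ColoredPerm n k) (r : ℕ) : Word k := growth k n π n r

/-- The saturated chain read left-to-right along the top edge of the growth diagram. -/
def QhatChain (k n : ℕ) (π : ColoredPerm n k) (c : ℕ) : Word k := growth k n π c n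

/-- The `k`-ribbon Fibonacci path tableau `P̂(π)` obtained from the right edge of the
growth diagram of `π`. -/
def PhatTab (k n : ℕ) (π : ColoredPerm n k) : Tab k := chainTab k (PhatChain k n π) n

/-- The `k`-ribbon Fibonacci path tableau `Q̂(π)` obtained from the top edge of the
growth diagram of `π`. -/
def QhatTab (k n : ℕ) (π : ColoredPerm n k) : Tab k := chainTab k (QhatChain k n π) n

end KRF
namespace KRF

def insStep (k : ℕ) : Tab k → (ℕ × ℕ) → Tab k := fun T p => insertVal k p.1 p.2 T

def ins (k : ℕ) (L : List (ℕ × ℕ)) : Tab k := L.foldl (insStep k) []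

def cols (n k : ℕ) (π : ColoredPerm n k) (c : ℕ) : List (ℕ × ℕ) :=
  ((List.finRange n).take c).map fun m => ((π.perm m : ℕ) + 1, π.color m)

def restr (r : ℕ) (L : List (ℕ × ℕ)) : List (ℕ × ℕ) := L.filter fun p => p.1 ≤ r

theorem insertVal_single_lt (k x j h0 v0 : ℕ) (rest : Tab k) (h : v0 < x) :
    insertVal k x j (Col.single h0 v0 :: rest) = Col.single j x :: Col.single h0 v0 :: rest := by
  simp [insertVal, Col.bottomVal, h]

theorem insertVal_single_ge (k x j h0 v0 : ℕ) (rest : Tab k) (h : ¬ v0 < x) :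
    insertVal k x j (Col.single h0 v0 :: rest) = Col.double j (k+1-j) x v0 :: rest := by
  simp [insertVal, Col.bottomVal, h]

theorem insertVal_double_lt (k x j ht hb vt vb : ℕ) (rest : Tab k) (h : vb < x) :
    insertVal k x j (Col.double ht hb vt vb :: rest)
      = Col.single j x :: Col.double ht hb vt vb :: rest := by
  simp [insertVal, Col.bottomVal, h]

theorem insertVal_double_ge (k x j ht hb vt vb : ℕ) (rest : Tab k) (h : ¬ vb < x) :
    insertVal k x j (Col.double ht hb vt vb :: rest)
      = Col.double j (k+1-j) x vb :: insertVal k vt ht rest := by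
  simp [insertVal, Col.bottomVal, h]

theorem mem_entries_insertVal (k : ℕ) :
    ∀ (T : Tab k) (x j v : ℕ), v ∈ Tab.entries (insertVal k x j T) → v = x ∨ v ∈ Tab.entries T := by
  intro T
  induction T with
  | nil => intro x j v hv; simp [insertVal, Tab.entries] at hv; exact Or.inl hv
  | cons c rest ih =>
    intro x j v hv
    cases c with
    | single h0 v0 =>
      by_cases h : v0 < x
      · rw [insertVal_single_lt k x j h0 v0 rest h] at hv
        simp [Tab.entries] at hv ⊢; tauto
      · rw [insertVal_single_ge k x j h0 v0 rest h] at hv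
        simp [Tab.entries] at hv ⊢; tauto
    | double ht hb vt vb =>
      by_cases h : vb < x
      · rw [insertVal_double_lt k x j ht hb vt vb rest h] at hv
        simp [Tab.entries] at hv ⊢; tauto
      · rw [insertVal_double_ge k x j ht hb vt vb rest h] at hv
        simp [Tab.entries] at hv ⊢
        rcases hv with h1 | h1 | h1
        · tauto
        · tauto
        · rcases ih vt ht v (by simpa [Tab.entries] using h1) with h2 | h2
          · tauto
          · simp [Tab.entries] at h2; tauto

theorem insertVal_of_max (k : ℕ) (T : Tab k) (x j : ℕ)
    (h : ∀ v ∈ Tab.entries T, v < x) :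
    insertVal k x j T = Col.single j x :: T := by
  cases T with
  | nil => rfl
  | cons c rest =>
    cases c with
    | single h0 v0 => exact insertVal_single_lt k x j h0 v0 rest (h v0 (by simp [Tab.entries]))
    | double ht hb vt vb =>
      exact insertVal_double_lt k x j ht hb vt vb rest (h vb (by simp [Tab.entries]))

theorem rank_shape_insertVal (k : ℕ) :
    ∀ (T : Tab k) (x j : ℕ),
      Word.rank (Tab.shape (insertVal k x j T)) = Word.rank (Tab.shape T) + 1 := by
  intro T
  induction T with
  | nil => intro x j; simp [insertVal, Tab.shape, Word.rank, Col.shape, Letter.rank]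
  | cons c rest ih =>
    intro x j
    cases c with
    | single h0 v0 =>
      by_cases h : v0 < x
      · rw [insertVal_single_lt k x j h0 v0 rest h]
        simp [Tab.shape, Word.rank, Col.shape, Letter.rank]; omega
      · rw [insertVal_single_ge k x j h0 v0 rest h]
        simp [Tab.shape, Word.rank, Col.shape, Letter.rank]; omega
    | double ht hb vt vb =>
      by_cases h : vb < x
      · rw [insertVal_double_lt k x j ht hb vt vb rest h]
        simp [Tab.shape, Word.rank, Col.shape, Letter.rank]; omega
      · rw [insertVal_double_ge k x j ht hb vt vb rest h]
        have := ih vt ht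
        simp [Tab.shape, Word.rank, Col.shape, Letter.rank] at this ⊢; omega

theorem rank_shape_foldl (k : ℕ) :
    ∀ (L : List (ℕ × ℕ)) (T : Tab k),
      Word.rank (Tab.shape (L.foldl (insStep k) T)) = Word.rank (Tab.shape T) + L.length := by
  intro L
  induction L with
  | nil => intro T; simp
  | cons p L ih =>
    intro T
    rw [List.foldl_cons, ih]
    have : insStep k T p = insertVal k p.1 p.2 T := rfl
    rw [this, rank_shape_insertVal]
    simp; omega

theorem rank_ins (k : ℕ) (L : List (ℕ × ℕ)) :
    Word.rank (Tab.shape (ins k L)) = L.length := by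
  have := rank_shape_foldl k L []
  simpa [ins, Tab.shape, Word.rank] using this

theorem mem_entries_foldl (k : ℕ) :
    ∀ (L : List (ℕ × ℕ)) (T : Tab k) (v : ℕ),
      v ∈ Tab.entries (L.foldl (insStep k) T) → v ∈ Tab.entries T ∨ ∃ p ∈ L, v = p.1 := by
  intro L
  induction L with
  | nil => intro T v h; exact Or.inl h
  | cons p L ih =>
    intro T v h
    rw [List.foldl_cons] at h
    rcases ih _ v h with h1 | h1
    · rcases mem_entries_insertVal k T p.1 p.2 v h1 with h2 | h2
      · exact Or.inr ⟨p, by simp, h2⟩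
      · exact Or.inl h2
    · rcases h1 with ⟨q, hq, hv⟩
      exact Or.inr ⟨q, by simp [hq], hv⟩

theorem mem_entries_ins (k : ℕ) (L : List (ℕ × ℕ)) (v : ℕ)
    (h : v ∈ Tab.entries (ins k L)) : ∃ p ∈ L, v = p.1 := by
  rcases mem_entries_foldl k L [] v h with h1 | h1
  · simp [Tab.entries] at h1
  · exact h1

theorem foldl_after_max (k : ℕ) :
    ∀ (C : List (ℕ × ℕ)) (d : ℕ × ℕ) (T : Tab k) (x jy : ℕ),
      (∀ p ∈ C, p.1 < x) → d.1 < x →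
      (C ++ [d]).foldl (insStep k) (Col.single jy x :: T)
        = Col.double d.2 (k + 1 - d.2) d.1 x :: C.foldl (insStep k) T := by
  intro C
  induction C using List.reverseRecOn with
  | nil =>
    intro d T x jy _ hd
    simp only [List.nil_append, List.foldl_cons, List.foldl_nil]
    exact insertVal_single_ge k d.1 d.2 jy x T (by omega)
  | append_singleton C e ih =>
    intro d T x jy hC hd
    have he : e.1 < x := hC e (by simp)
    have hC' : ∀ p ∈ C, p.1 < x := fun p hp => hC p (by simp [hp])
    rw [List.foldl_append, ih e T x jy hC' he]
    simp only [List.foldl_cons, List.foldl_nil]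
    have h1 : insStep k (Col.double e.2 (k + 1 - e.2) e.1 x :: C.foldl (insStep k) T) d
        = Col.double d.2 (k+1-d.2) d.1 x :: insertVal k e.1 e.2 (C.foldl (insStep k) T) :=
      insertVal_double_ge k d.1 d.2 e.2 (k+1-e.2) e.1 x _ (by omega)
    rw [h1, List.foldl_append]
    simp only [List.foldl_cons, List.foldl_nil]
    rfl

theorem restr_cons_le {r : ℕ} {p : ℕ × ℕ} (L : List (ℕ × ℕ)) (h : p.1 ≤ r) :
    restr r (p :: L) = p :: restr r L := by
  simp [restr, List.filter_cons, h]

theorem restr_cons_gt {r : ℕ} {p : ℕ × ℕ} (L : List (ℕ × ℕ)) (h : ¬ p.1 ≤ r) :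
    restr r (p :: L) = restr r L := by
  simp [restr, List.filter_cons, h]

theorem restr_append (r : ℕ) (L M : List (ℕ × ℕ)) :
    restr r (L ++ M) = restr r L ++ restr r M := by
  simp [restr, List.filter_append]

theorem mem_restr {r : ℕ} {p : ℕ × ℕ} {L : List (ℕ × ℕ)} (h : p ∈ restr r L) :
    p ∈ L ∧ p.1 ≤ r := by
  have := List.mem_filter.mp h
  simpa using this

theorem restr_eq_of_not_mem (r : ℕ) (L : List (ℕ × ℕ)) (h : ∀ p ∈ L, p.1 ≠ r + 1) :
    restr (r + 1) L = restr r L := by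
  unfold restr
  apply List.filter_congr
  intro p hp
  have := h p hp
  simp only [decide_eq_decide]
  omega

theorem restr_decomp (r : ℕ) :
    ∀ L : List (ℕ × ℕ), (L.map Prod.fst).Nodup → (∃ p ∈ L, p.1 = r + 1) →
      ∃ B y C, y.1 = r + 1 ∧ restr (r + 1) L = B ++ y :: C ∧ restr r L = B ++ C := by
  intro L
  induction L with
  | nil => intro _ h; simp at h
  | cons p L ih =>
    intro hnd hex
    rw [List.map_cons, List.nodup_cons] at hnd
    by_cases hp : p.1 = r + 1
    · refine ⟨[], p, restr r L, hp, ?_, ?_⟩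
      · have h1 : restr (r + 1) L = restr r L := by
          apply restr_eq_of_not_mem
          intro q hq hq1
          exact hnd.1 (by rw [hp, ← hq1]; exact List.mem_map_of_mem (f := Prod.fst) hq)
        rw [restr_cons_le L (by omega), h1]; rfl
      · rw [restr_cons_gt L (by omega)]; rfl
    · rcases hex with ⟨q, hq, hq1⟩
      have hqL : q ∈ L := by
        rcases List.mem_cons.mp hq with h | h
        · exact absurd (h ▸ hq1) hp
        · exact h
      rcases ih hnd.2 ⟨q, hqL, hq1⟩ with ⟨B, y, C, hy, h1, h2⟩
      by_cases hpr : p.1 ≤ r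
      · exact ⟨p :: B, y, C, hy, by rw [restr_cons_le L (by omega), h1]; rfl,
          by rw [restr_cons_le L hpr, h2]; rfl⟩
      · exact ⟨B, y, C, hy, by rw [restr_cons_gt L (by omega), h1],
          by rw [restr_cons_gt L hpr, h2]⟩

theorem mem_cols_iff {n k : ℕ} (π : ColoredPerm n k) (c : ℕ) (p : ℕ × ℕ) :
    p ∈ cols n k π c ↔ ∃ m : Fin n, (m : ℕ) < c ∧ p = ((π.perm m : ℕ) + 1, π.color m) := by
  constructor
  · intro hp
    rcases List.mem_map.mp hp with ⟨m, hm, rfl⟩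
    rcases List.mem_take_iff_getElem.mp hm with ⟨i, hi, hig⟩
    refine ⟨m, ?_, rfl⟩
    have : (List.finRange n)[i] = m := hig
    have hv : (m : ℕ) = i := by rw [← this]; simp [List.getElem_finRange]
    omega
  · rintro ⟨m, hm, rfl⟩
    apply List.mem_map_of_mem
    apply List.mem_take_iff_getElem.mpr
    refine ⟨(m : ℕ), ?_, ?_⟩
    · simp; omega
    · simp [List.getElem_finRange]

theorem cols_succ_of_lt {n k : ℕ} (π : ColoredPerm n k) {c : ℕ} (hc : c < n) :
    cols n k π (c + 1) = cols n k π c ++ [((π.perm ⟨c, hc⟩ : ℕ) + 1, π.color ⟨c, hc⟩)] := by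
  unfold cols
  have hsing : [((π.perm ⟨c, hc⟩ : ℕ) + 1, π.color ⟨c, hc⟩)]
      = List.map (fun m => ((π.perm m : ℕ) + 1, π.color m)) [(⟨c, hc⟩ : Fin n)] := rfl
  rw [hsing, ← List.map_append]
  congr 1
  rw [List.take_succ, List.getElem?_eq_getElem (by simpa using hc)]
  simp [List.getElem_finRange]

theorem cols_succ_of_ge {n k : ℕ} (π : ColoredPerm n k) {c : ℕ} (hc : ¬ c < n) :
    cols n k π (c + 1) = cols n k π c := by
  unfold cols
  rw [List.take_of_length_le (by simp; omega), List.take_of_length_le (by simp; omega)]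

theorem cols_fst_nodup {n k : ℕ} (π : ColoredPerm n k) (c : ℕ) :
    ((cols n k π c).map Prod.fst).Nodup := by
  unfold cols
  rw [List.map_map]
  apply List.Nodup.map
  · intro a b hab
    simp only [Function.comp] at hab
    have : π.perm a = π.perm b := by
      apply Fin.val_injective; omega
    exact π.perm.injective this
  · exact ((List.take_sublist _ _).nodup (List.nodup_finRange n))

theorem growthRule_right (k : ℕ) (ν μ₁ : Word k) : growthRule k ν μ₁ ν none = μ₁ := by
  by_cases h : μ₁ = ν
  · simp [growthRule, h]
  · simp [growthRule, h]

theorem growthRule_left (k : ℕ) (ν μ₂ : Word k) : growthRule k ν ν μ₂ none = μ₂ := by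
  by_cases h : μ₂ = ν
  · simp [growthRule, h]
  · simp [growthRule, h]

theorem growthRule_new (k : ℕ) (ν : Word k) (j : ℕ) :
    growthRule k ν ν ν (some j) = Letter.one j :: ν := by simp [growthRule]

theorem growthRule_both (k : ℕ) (ν μ₁ μ₂ : Word k) (h1 : μ₁ ≠ ν) (h2 : μ₂ ≠ ν) (x : Option ℕ) :
    growthRule k ν μ₁ μ₂ x = Letter.two :: ν := by simp [growthRule, h1, h2]

theorem ins_append (k : ℕ) (L M : List (ℕ × ℕ)) :
    ins k (L ++ M) = M.foldl (insStep k) (ins k L) := by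
  simp [ins, List.foldl_append]

theorem restr_singleton_le {r : ℕ} {p : ℕ × ℕ} (h : p.1 ≤ r) : restr r [p] = [p] := by
  simp [restr, List.filter_cons, h]

theorem restr_singleton_gt {r : ℕ} {p : ℕ × ℕ} (h : ¬ p.1 ≤ r) : restr r [p] = [] := by
  simp [restr, List.filter_cons, h]

theorem squareX_eq (k n : ℕ) (π : ColoredPerm n k) {c r : ℕ} (hc : c < n) (hr : r < n)
    (hp : (π.perm ⟨c, hc⟩ : ℕ) = r) : squareX k n π c r = some (π.color ⟨c, hc⟩) := by
  unfold squareX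
  rw [dif_pos ⟨hc, hr⟩, if_pos hp]

theorem squareX_none_of_ne (k n : ℕ) (π : ColoredPerm n k) {c r : ℕ}
    (h : ∀ (hc : c < n), (π.perm ⟨c, hc⟩ : ℕ) ≠ r) : squareX k n π c r = none := by
  unfold squareX
  by_cases hcr : c < n ∧ r < n
  · rw [dif_pos hcr, if_neg (h hcr.1)]
  · rw [dif_neg hcr]

theorem growth_eq (k n : ℕ) (π : ColoredPerm n k) :
    ∀ c r, growth k n π c r = Tab.shape (ins k (restr r (cols n k π c))) := by
  intro c
  induction c with
  | zero =>
    intro r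
    rw [growth]
    simp [cols, restr, ins, Tab.shape]
  | succ c ihc =>
    intro r
    induction r with
    | zero =>
      rw [growth]
      have h0 : restr 0 (cols n k π (c + 1)) = [] := by
        apply List.filter_eq_nil_iff.mpr
        intro p hp
        rcases (mem_cols_iff π _ p).mp hp with ⟨m, _, rfl⟩
        simp
      rw [h0]; rfl
    | succ r ihr =>
      rw [growth, ihc r, ihc (r + 1), ihr]
      by_cases hc : c < n
      · obtain ⟨v, hv⟩ : ∃ v, v = (π.perm ⟨c, hc⟩ : ℕ) + 1 := ⟨_, rfl⟩
        obtain ⟨jc, hjc⟩ : ∃ jc, jc = π.color ⟨c, hc⟩ := ⟨_, rfl⟩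
        have hcols : cols n k π (c + 1) = cols n k π c ++ [(v, jc)] := by
          rw [cols_succ_of_lt π hc, ← hv, ← hjc]
        rcases Nat.lt_trichotomy v (r + 1) with hvr | hvr | hvr
        · -- v ≤ r
          have hvr' : v ≤ r := by omega
          have hX : squareX k n π c r = none := by
            apply squareX_none_of_ne
            intro hc' habs
            have habs' : (π.perm ⟨c, hc⟩ : ℕ) = r := habs
            omega
          rw [hX, hcols, restr_append, restr_append,
            restr_singleton_le (show ((v, jc) : ℕ × ℕ).1 ≤ r from hvr'),
            restr_singleton_le (show ((v, jc) : ℕ × ℕ).1 ≤ r + 1 by show v ≤ r + 1; omega)]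
          rcases Classical.em (∃ p ∈ cols n k π c, p.1 = r + 1) with hex | hex
          · rcases restr_decomp r (cols n k π c) (cols_fst_nodup π c) hex with
              ⟨B, y, C, hy, h1, h2⟩
            rw [h1, h2]
            have hBC : ∀ q ∈ B ++ C, q.1 ≤ r := by
              intro q hq
              exact (mem_restr (show q ∈ restr r (cols n k π c) by rw [h2]; exact hq)).2
            have hBent : ∀ w ∈ Tab.entries (ins k B), w < y.1 := by
              intro w hw
              rcases mem_entries_ins k B w hw with ⟨p, hp, rfl⟩
              have := hBC p (List.mem_append_left C hp)
              omega
            have hlam : ins k ((B ++ y :: C) ++ [(v, jc)])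
                = Col.double jc (k + 1 - jc) v y.1 :: ins k (B ++ C) := by
              have e1 : (B ++ y :: C) ++ [(v, jc)] = B ++ (y :: (C ++ [(v, jc)])) := by simp
              rw [e1, ins_append, List.foldl_cons]
              have e2 : insStep k (ins k B) y = Col.single y.2 y.1 :: ins k B :=
                insertVal_of_max k _ _ _ hBent
              rw [e2, foldl_after_max k C (v, jc) (ins k B) y.1 y.2
                (by intro p hp; have := hBC p (List.mem_append_right B hp); omega)
                (by show v < y.1; omega), ins_append]
            have h1neq : Tab.shape (ins k (B ++ y :: C)) ≠ Tab.shape (ins k (B ++ C)) := by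
              intro heq
              have h3 := congrArg Word.rank heq
              rw [rank_ins, rank_ins] at h3
              simp [List.length_append] at h3
            have h2neq : Tab.shape (ins k ((B ++ C) ++ [(v, jc)]))
                ≠ Tab.shape (ins k (B ++ C)) := by
              intro heq
              have h3 := congrArg Word.rank heq
              rw [rank_ins, rank_ins] at h3
              simp [List.length_append] at h3
            rw [hlam, growthRule_both k _ _ _ h1neq h2neq none]
            simp [Tab.shape, Col.shape]
          · have hmu : restr (r + 1) (cols n k π c) = restr r (cols n k π c) := by
              apply restr_eq_of_not_mem
              intro p hp hp1
              exact hex ⟨p, hp, hp1⟩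
            rw [hmu]
            exact growthRule_left k _ _
        · -- v = r + 1
          have hperm : (π.perm ⟨c, hc⟩ : ℕ) = r := by omega
          have hr : r < n := by have := (π.perm ⟨c, hc⟩).isLt; omega
          have hX : squareX k n π c r = some jc := by
            rw [squareX_eq k n π hc hr hperm, hjc]
          have hnot : ∀ p ∈ cols n k π c, p.1 ≠ r + 1 := by
            intro p hp hp1
            rcases (mem_cols_iff π c p).mp hp with ⟨m, hm, rfl⟩
            simp only at hp1
            have hpm : (π.perm m : ℕ) = r := by omega
            have hmm : π.perm m = π.perm ⟨c, hc⟩ := Fin.val_injective (by omega)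
            have : (m : ℕ) = c := congrArg Fin.val (π.perm.injective hmm)
            omega
          have hmu : restr (r + 1) (cols n k π c) = restr r (cols n k π c) :=
            restr_eq_of_not_mem r _ hnot
          rw [hX, hcols, restr_append, restr_append,
            restr_singleton_gt (show ¬ ((v, jc) : ℕ × ℕ).1 ≤ r by show ¬ v ≤ r; omega),
            restr_singleton_le (show ((v, jc) : ℕ × ℕ).1 ≤ r + 1 by show v ≤ r + 1; omega),
            hmu, List.append_nil]
          have hmax : ∀ w ∈ Tab.entries (ins k (restr r (cols n k π c))), w < v := by
            intro w hw
            rcases mem_entries_ins k _ w hw with ⟨p, hp, rfl⟩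
            have := (mem_restr hp).2
            omega
          have hlam : ins k (restr r (cols n k π c) ++ [(v, jc)])
              = Col.single jc v :: ins k (restr r (cols n k π c)) := by
            rw [ins_append]
            simp only [List.foldl_cons, List.foldl_nil]
            exact insertVal_of_max k _ _ _ hmax
          rw [hlam, growthRule_new]
          simp [Tab.shape, Col.shape]
        · -- v > r + 1
          have hX : squareX k n π c r = none := by
            apply squareX_none_of_ne
            intro hc' habs
            have habs' : (π.perm ⟨c, hc⟩ : ℕ) = r := habs
            omega
          rw [hX, hcols, restr_append, restr_append,
            restr_singleton_gt (show ¬ ((v, jc) : ℕ × ℕ).1 ≤ r by show ¬ v ≤ r; omega),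
            restr_singleton_gt (show ¬ ((v, jc) : ℕ × ℕ).1 ≤ r + 1 by show ¬ v ≤ r + 1; omega),
            List.append_nil, List.append_nil]
          exact growthRule_right k _ _
      · -- c ≥ n
        have hX : squareX k n π c r = none := by
          unfold squareX
          rw [dif_neg (by tauto)]
        rw [hX, cols_succ_of_ge π hc]
        exact growthRule_right k _ _

theorem PPartial_eq_ins (k n : ℕ) (π : ColoredPerm n k) (c : ℕ) :
    PPartial k n π c = ins k (cols n k π c) := by
  unfold PPartial ins cols
  rw [List.foldl_map]
  rfl

theorem restr_cols (k n : ℕ) (π : ColoredPerm n k) (c : ℕ) :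
    restr n (cols n k π c) = cols n k π c := by
  unfold restr
  apply List.filter_eq_self.mpr
  intro p hp
  rcases (mem_cols_iff π c p).mp hp with ⟨m, _, rfl⟩
  simp


/-- For every `k`-colored permutation `π` of length `n`, the recording
tableau of the `k`-ribbon insertion algorithm equals the path tableau produced by Fomin's
growth rules along the top edge of the square diagram:  `Q(π) = Q̂(π)`. -/
theorem QTab_eq_QhatTab (k n : ℕ) (hk : 1 ≤ k) (π : ColoredPerm n k) :
    QTab k n π = QhatTab k n π := by
  have hchain : QChain k n π = QhatChain k n π := by
    funext c
    rw [QChain, PPartial_eq_ins, QhatChain, growth_eq, restr_cols]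
  rw [QTab, QhatTab, hchain]

end KRF
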